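/- Fix a positive integer r. For every real ε > 0 there exists a constant C = C(r, ε) such that for every positive integer K, the number R_r(K) of solutions (x₁, ..., x_{2r}) of integers with 1 ≤ x₁, ..., x_{2r} ≤ K of the equation x₁ ⋯ x_r = x_{r+1} ⋯ x_{2r} satisfies R_r(K) ≤ C K^{r + ε}. -/

import Mathlib

open Finset

/-- `R_r(K)`: the number of `2r`-tuples `(x₁, …, x_{2r})` of integers with
`1 ≤ x₁, …, x_{2r} ≤ K` satisfying `x₁ ⋯ x_r = x_{r+1} ⋯ x_{2r}`. The tuple is encoded as
a pair of `r`-tuples. -/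
noncomputable def productEqCount (r K : ℕ) : ℕ :=
  Set.ncard {p : (Fin r → ℕ) × (Fin r → ℕ) |
    (∀ i, 1 ≤ p.1 i ∧ p.1 i ≤ K) ∧ (∀ i, 1 ≤ p.2 i ∧ p.2 i ≤ K) ∧
    ∏ i, p.1 i = ∏ i, p.2 i}

open Real

lemma divisor_bound (δ : ℝ) (hδ : 0 < δ) :
    ∃ C : ℝ, 1 ≤ C ∧ ∀ n : ℕ, n ≠ 0 →
      (n.divisors.card : ℝ) ≤ C * (n : ℝ) ^ δ := by
  set c : ℝ := δ * Real.log 2 with hc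
  have hc0 : 0 < c := mul_pos hδ (Real.log_pos one_lt_two)
  set M : ℝ := max 1 (1 / c) with hM
  have hM1 : 1 ≤ M := le_max_left _ _
  have hMc : 1 ≤ M * c := by
    calc (1:ℝ) = (1/c) * c := by field_simp
    _ ≤ M * c := by gcongr; exact le_max_right _ _
  set T : ℝ := (2:ℝ) ^ (1/δ) with hT
  refine ⟨M ^ (⌈T⌉₊), one_le_pow₀ hM1, ?_⟩
  intro n hn
  -- key per-prime bound
  have key : ∀ p ∈ n.primeFactors,
      ((n.factorization p + 1 : ℕ) : ℝ) ≤
        (if (p : ℝ) < T then M else 1) * (p : ℝ) ^ ((n.factorization p : ℝ) * δ) := by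
    intro p hp
    have hpp : p.Prime := Nat.prime_of_mem_primeFactors hp
    have hp2 : (2:ℝ) ≤ (p:ℝ) := by exact_mod_cast hpp.two_le
    set a : ℕ := n.factorization p
    by_cases hpt : (p : ℝ) < T
    · simp only [if_pos hpt]
      have h1 : ((a + 1 : ℕ) : ℝ) ≤ M * (2:ℝ) ^ ((a:ℝ) * δ) := by
        have h2 : (2:ℝ) ^ ((a:ℝ) * δ) = Real.exp ((a:ℝ) * c) := by
          rw [hc, Real.rpow_def_of_pos two_pos]
          congr 1; ring
        rw [h2]
        have h3 : (a:ℝ) * c + 1 ≤ Real.exp ((a:ℝ) * c) := Real.add_one_le_exp _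
        have ha0 : (0:ℝ) ≤ (a:ℝ) := Nat.cast_nonneg a
        push_cast
        nlinarith [mul_le_mul_of_nonneg_left h3 (le_trans zero_le_one hM1)]
      calc ((a + 1 : ℕ) : ℝ) ≤ M * (2:ℝ) ^ ((a:ℝ) * δ) := h1
      _ ≤ M * (p:ℝ) ^ ((a:ℝ) * δ) := by
          have := Real.rpow_le_rpow (by norm_num) hp2 (by positivity : (0:ℝ) ≤ (a:ℝ)*δ)
          nlinarith [Real.rpow_nonneg (show (0:ℝ) ≤ 2 by norm_num) ((a:ℝ)*δ)]
    · simp only [if_neg hpt, one_mul]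
      push_neg at hpt
      have hTδ : (2:ℝ) ≤ (p:ℝ) ^ δ := by
        have := Real.rpow_le_rpow (by positivity) hpt hδ.le
        rwa [hT, ← Real.rpow_mul (by norm_num), one_div_mul_cancel hδ.ne',
          Real.rpow_one] at this
      have h4 : a + 1 ≤ 2 ^ a := @Nat.lt_two_pow_self a
      calc ((a + 1 : ℕ) : ℝ) ≤ ((2:ℝ)) ^ a := by exact_mod_cast h4
      _ ≤ ((p:ℝ) ^ δ) ^ a := by
          apply pow_le_pow_left₀ (by norm_num) hTδ
      _ = (p:ℝ) ^ ((a:ℝ) * δ) := by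
          rw [← Real.rpow_natCast ((p:ℝ)^δ), ← Real.rpow_mul (by positivity), mul_comm]
  have hdiv : (n.divisors.card : ℝ) =
      ∏ p ∈ n.primeFactors, ((n.factorization p + 1 : ℕ) : ℝ) := by
    rw [Nat.card_divisors hn]; push_cast; rfl
  have hprod : ∏ p ∈ n.primeFactors, (p : ℝ) ^ ((n.factorization p : ℝ) * δ)
      = (n : ℝ) ^ δ := by
    have : ∀ p ∈ n.primeFactors, (p : ℝ) ^ ((n.factorization p : ℝ) * δ)
        = (((p ^ n.factorization p : ℕ) : ℝ)) ^ δ := by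
      intro p hp
      rw [Real.rpow_mul (by positivity), Real.rpow_natCast]
      push_cast; rfl
    rw [Finset.prod_congr rfl this,
      Real.finset_prod_rpow _ _ (fun p _ => by positivity) δ]
    congr 1
    rw [← Nat.cast_prod]
    congr 1
    exact Nat.factorization_prod_pow_eq_self hn
  have hsmall : ∏ p ∈ n.primeFactors, (if (p : ℝ) < T then M else 1) ≤ M ^ (⌈T⌉₊) := by
    have heq : ∏ p ∈ n.primeFactors, (if (p : ℝ) < T then M else 1)
        = M ^ (n.primeFactors.filter (fun p : ℕ => (p:ℝ) < T)).card := by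
      rw [Finset.prod_ite, Finset.prod_const, Finset.prod_const, one_pow, mul_one]
    rw [heq]
    apply pow_le_pow_right₀ hM1
    calc (n.primeFactors.filter (fun p : ℕ => (p:ℝ) < T)).card
        ≤ (Finset.range ⌈T⌉₊).card := by
          apply Finset.card_le_card
          intro p hp
          simp only [Finset.mem_filter] at hp
          simp only [Finset.mem_range]
          have : (p:ℝ) < (⌈T⌉₊ : ℝ) := lt_of_lt_of_le hp.2 (Nat.le_ceil T)
          exact_mod_cast this
      _ = ⌈T⌉₊ := Finset.card_range _
  calc (n.divisors.card : ℝ)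
      ≤ ∏ p ∈ n.primeFactors,
          ((if (p : ℝ) < T then M else 1) * (p : ℝ) ^ ((n.factorization p : ℝ) * δ)) := by
        rw [hdiv]
        exact Finset.prod_le_prod (fun p _ => by positivity) key
    _ = (∏ p ∈ n.primeFactors, (if (p : ℝ) < T then M else 1)) *
          ∏ p ∈ n.primeFactors, (p : ℝ) ^ ((n.factorization p : ℝ) * δ) := by
        rw [Finset.prod_mul_distrib]
    _ ≤ M ^ (⌈T⌉₊) * (n : ℝ) ^ δ := by
        rw [hprod]
        gcongr


section counting

variable (r K : ℕ)

noncomputable def boxA : Finset (Fin r → ℕ) :=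
  Fintype.piFinset fun _ : Fin r => Finset.Icc 1 K

noncomputable def solT : Finset ((Fin r → ℕ) × (Fin r → ℕ)) :=
  (boxA r K ×ˢ boxA r K).filter fun p => ∏ i, p.1 i = ∏ i, p.2 i

lemma productEqCount_eq : productEqCount r K = (solT r K).card := by
  rw [productEqCount, ← Set.ncard_coe_finset]
  congr 1
  ext p
  simp only [solT, boxA, Finset.coe_filter, Set.mem_setOf_eq, Finset.mem_product,
    Fintype.mem_piFinset, Finset.mem_Icc]
  tauto

lemma fiber_card_le {n : ℕ} (hn : n ≠ 0) :
    ((boxA r K).filter fun y => ∏ i, y i = n).card ≤ n.divisors.card ^ r := by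
  calc ((boxA r K).filter fun y => ∏ i, y i = n).card
      ≤ (Fintype.piFinset fun _ : Fin r => n.divisors).card := by
        apply Finset.card_le_card
        intro y hy
        simp only [Finset.mem_filter] at hy
        simp only [Fintype.mem_piFinset]
        intro i
        rw [Nat.mem_divisors]
        exact ⟨hy.2 ▸ Finset.dvd_prod_of_mem y (Finset.mem_univ i), hn⟩
    _ = n.divisors.card ^ r := by
        rw [Fintype.card_piFinset]
        simp

lemma solT_card_le :
    (solT r K).card ≤ ∑ x ∈ boxA r K,
      ((boxA r K).filter fun y => ∏ i, y i = ∏ i, x i).card := by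
  rw [Finset.card_eq_sum_card_fiberwise (f := Prod.fst) (t := boxA r K)
    (fun p hp => by
      simp only [solT, Finset.mem_coe, Finset.mem_filter, Finset.mem_product] at hp
      exact hp.1.1)]
  apply Finset.sum_le_sum
  intro x hx
  apply Finset.card_le_card_of_injOn (fun p => p.2)
  · intro p hp
    simp only [solT, Finset.mem_coe, Finset.mem_filter, Finset.mem_product] at hp
    simp only [Finset.mem_coe, Finset.mem_filter]
    exact ⟨hp.1.1.2, by rw [← hp.1.2, hp.2]⟩
  · intro p hp q hq hpq
    simp only [Finset.mem_coe, Finset.mem_filter] at hp hq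
    exact Prod.ext (hp.2.trans hq.2.symm) hpq

end counting

/-- Lemma: fix a positive integer `r`. For every `ε > 0` there is a constant `C = C(r, ε)`
such that `R_r(K) ≤ C K^{r+ε}` for every positive integer `K`. -/
theorem product_equation_count_bound (r : ℕ) (hr : 1 ≤ r) (ε : ℝ) (hε : 0 < ε) :
    ∃ C : ℝ, ∀ K : ℕ, 1 ≤ K →
      (productEqCount r K : ℝ) ≤ C * (K : ℝ) ^ ((r : ℝ) + ε) := by
  have hr0 : (0:ℝ) < (r:ℝ) := by exact_mod_cast hr
  set δ : ℝ := ε / (r^2 : ℕ) with hδdef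
  have hδ : 0 < δ := by
    apply div_pos hε
    positivity
  obtain ⟨C, hC1, hC⟩ := divisor_bound δ hδ
  refine ⟨C ^ r, ?_⟩
  intro K hK
  have hK0 : (0:ℝ) < (K:ℝ) := by exact_mod_cast hK
  -- bound each fiber
  have hfib : ∀ x ∈ boxA r K,
      (((boxA r K).filter fun y => ∏ i, y i = ∏ i, x i).card : ℝ)
        ≤ C ^ r * (K:ℝ) ^ ε := by
    intro x hx
    set n : ℕ := ∏ i, x i with hn
    have hx' : ∀ i, 1 ≤ x i ∧ x i ≤ K := by
      intro i
      have := (Fintype.mem_piFinset.mp hx) i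
      simpa [Finset.mem_Icc] using this
    have hn0 : n ≠ 0 := by
      have : 0 < n := Finset.prod_pos fun i _ => (hx' i).1
      omega
    have hnK : n ≤ K ^ r := by
      calc n ≤ ∏ _i : Fin r, K := Finset.prod_le_prod' fun i _ => (hx' i).2
        _ = K ^ r := by simp
    have h1 : (((boxA r K).filter fun y => ∏ i, y i = n).card : ℝ)
        ≤ ((n.divisors.card : ℝ)) ^ r := by
      exact_mod_cast fiber_card_le r K hn0
    have h2 : ((n.divisors.card : ℝ)) ^ r ≤ (C * (n:ℝ) ^ δ) ^ r := by
      apply pow_le_pow_left₀ (by positivity) (hC n hn0)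
    have h3 : (C * (n:ℝ) ^ δ) ^ r ≤ (C * ((K:ℝ) ^ r) ^ δ) ^ r := by
      apply pow_le_pow_left₀ (by positivity)
      have hnr : (n:ℝ) ≤ (K:ℝ) ^ r := by
        calc (n:ℝ) ≤ ((K ^ r : ℕ) : ℝ) := by exact_mod_cast hnK
          _ = (K:ℝ) ^ r := by push_cast; ring
      gcongr
    have h4 : (C * ((K:ℝ) ^ r) ^ δ) ^ r = C ^ r * (K:ℝ) ^ ε := by
      rw [mul_pow, ← Real.rpow_natCast ((K:ℝ)) r, ← Real.rpow_mul hK0.le,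
        ← Real.rpow_natCast ((K:ℝ) ^ ((r:ℝ) * δ)) r, ← Real.rpow_mul hK0.le]
      congr 2
      rw [hδdef]
      push_cast
      field_simp
    calc (((boxA r K).filter fun y => ∏ i, y i = n).card : ℝ)
        ≤ ((n.divisors.card : ℝ)) ^ r := h1
      _ ≤ (C * (n:ℝ) ^ δ) ^ r := h2
      _ ≤ (C * ((K:ℝ) ^ r) ^ δ) ^ r := h3
      _ = C ^ r * (K:ℝ) ^ ε := h4
  have hA : ((boxA r K).card : ℝ) = (K:ℝ) ^ r := by
    rw [boxA, Fintype.card_piFinset]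
    simp [Nat.card_Icc]
  calc (productEqCount r K : ℝ)
      = ((solT r K).card : ℝ) := by rw [productEqCount_eq]
    _ ≤ ∑ x ∈ boxA r K,
        (((boxA r K).filter fun y => ∏ i, y i = ∏ i, x i).card : ℝ) := by
        exact_mod_cast solT_card_le r K
    _ ≤ ∑ _x ∈ boxA r K, C ^ r * (K:ℝ) ^ ε := Finset.sum_le_sum hfib
    _ = ((boxA r K).card : ℝ) * (C ^ r * (K:ℝ) ^ ε) := by
        rw [Finset.sum_const, nsmul_eq_mul]
    _ = C ^ r * (K : ℝ) ^ ((r : ℝ) + ε) := by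
        rw [hA, Real.rpow_add hK0, ← Real.rpow_natCast (K:ℝ) r]
        ring
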